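/- Let G be a locally compact second countable topological group with a left-invariant Haar measure μ, and let K be a compact open subgroup of G. If μ(KgK) = μ(Kg⁻¹K) for every g ∈ G, then μ is also right-invariant; that is, G is unimodular. -/

import Mathlib

open Pointwise MeasureTheory
open scoped NNReal ENNReal

/-- If the double cosets `KgK` and `Kg⁻¹K` of a compact open subgroup `K` always
have equal left Haar measure, then the group is unimodular. -/
theorem stmt6 {G : Type*} [Group G] [TopologicalSpace G] [IsTopologicalGroup G]
    [LocallyCompactSpace G] [SecondCountableTopology G] [MeasurableSpace G] [BorelSpace G]
    (μ : Measure G) [μ.IsHaarMeasure]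
    (K : Subgroup G) (hKcomp : IsCompact (K : Set G)) (hKopen : IsOpen (K : Set G))
    (h : ∀ g : G,
      μ ((K : Set G) * {g} * (K : Set G)) = μ ((K : Set G) * {g⁻¹} * (K : Set G))) :
    μ.IsMulRightInvariant := by
  classical
  have hK0 : μ (K : Set G) ≠ 0 := hKopen.measure_ne_zero μ ⟨1, K.one_mem⟩
  have hKtop : μ (K : Set G) ≠ ⊤ := hKcomp.measure_lt_top.ne
  -- right translates of K are open
  have hopen : ∀ a : G, IsOpen ((K : Set G) * {a}) := by
    intro a
    rw [Set.mul_singleton, Set.image_mul_right]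
    exact hKopen.preimage (continuous_mul_right a⁻¹)
  set Δ : G → ℝ≥0 := fun t => Measure.haarScalarFactor (Measure.map (· * t⁻¹) μ) μ with hΔdef
  have key : ∀ (t : G) (A : Set G), MeasurableSet A → μ (A * {t}) = Δ t * μ A := by
    intro t A hA
    have h1 : Measure.map (· * t⁻¹) μ = Δ t • μ :=
      Measure.isMulLeftInvariant_eq_smul _ μ
    have h2 : A * {t} = (· * t⁻¹) ⁻¹' A := by
      rw [Set.mul_singleton, Set.image_mul_right]
    rw [h2, ← Measure.map_apply (measurable_mul_const t⁻¹) hA, h1]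
    simp
  -- K * {k} = K for k ∈ K
  have hKk : ∀ k ∈ K, (K : Set G) * {k} = K := by
    intro k hk
    ext x
    simp only [Set.mul_singleton, Set.mem_image, SetLike.mem_coe]
    constructor
    · rintro ⟨y, hy, rfl⟩; exact K.mul_mem hy hk
    · intro hx; exact ⟨x * k⁻¹, K.mul_mem hx (K.inv_mem hk), by simp⟩
  have hΔK : ∀ k ∈ K, ((Δ k : ℝ≥0∞)) = 1 := by
    intro k hk
    have h1 := key k K hKopen.measurableSet
    rw [hKk k hk] at h1
    have : (Δ k : ℝ≥0∞) * μ (K : Set G) = 1 * μ (K : Set G) := by rw [one_mul, ← h1]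
    exact (ENNReal.mul_left_inj hK0 hKtop).mp this
  -- measure of right cosets K * {x⁻¹} for x in the double coset
  have hright : ∀ g : G, ∀ x ∈ (K : Set G) * {g} * (K : Set G),
      μ ((K : Set G) * {x⁻¹}) = Δ g⁻¹ * μ (K : Set G) := by
    intro g x hx
    obtain ⟨a, ha, k2, hk2, rfl⟩ := hx
    obtain ⟨k1, hk1, g', hg', rfl⟩ := ha
    obtain rfl : g = g' := (Set.mem_singleton_iff.mp hg').symm
    have e1 : (K : Set G) * {(k1 * g * k2)⁻¹} =
        (K : Set G) * {g⁻¹} * {k1⁻¹} := by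
      have : (k1 * g * k2)⁻¹ = k2⁻¹ * g⁻¹ * k1⁻¹ := by group
      rw [this, ← Set.singleton_mul_singleton, ← Set.singleton_mul_singleton,
        ← mul_assoc, ← mul_assoc, hKk k2⁻¹ (K.inv_mem hk2)]
    rw [e1, key k1⁻¹ _ (hopen g⁻¹).measurableSet, hΔK k1⁻¹ (K.inv_mem hk1), one_mul,
      key g⁻¹ _ hKopen.measurableSet]
  -- main step: Δ g⁻¹ = 1 for all g
  have hΔone : ∀ g : G, (Δ g⁻¹ : ℝ≥0∞) = 1 := by
    intro g
    set D : Set G := (K : Set G) * {g} * (K : Set G) with hDdef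
    have hgD : g ∈ D := by
      have : (1 : G) * g * 1 ∈ D :=
        Set.mul_mem_mul (Set.mul_mem_mul K.one_mem rfl) K.one_mem
      simpa using this
    have hDcomp : IsCompact D := (hKcomp.mul isCompact_singleton).mul hKcomp
    have hDsat : QuotientGroup.mk ⁻¹' ((QuotientGroup.mk : G → G ⧸ K) '' D) = D := by
      rw [QuotientGroup.preimage_image_mk_eq_mul, hDdef, mul_assoc, coe_mul_coe]
    -- fibers of the quotient map
    have fib : ∀ q : G ⧸ K, (QuotientGroup.mk : G → G ⧸ K) ⁻¹' {q} = q.out • (K : Set G) := by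
      intro q
      ext x
      simp only [Set.mem_preimage, Set.mem_singleton_iff, mem_leftCoset_iff, SetLike.mem_coe]
      rw [← QuotientGroup.eq, QuotientGroup.out_eq']
      exact eq_comm
    have fibopen : ∀ q : G ⧸ K, IsOpen ((QuotientGroup.mk : G → G ⧸ K) ⁻¹' {q}) := by
      intro q; rw [fib]; exact hKopen.smul _
    set T : Set (G ⧸ K) := (QuotientGroup.mk : G → G ⧸ K) '' D with hTdef
    have hTfin : T.Finite := by
      obtain ⟨S, hS⟩ := hDcomp.elim_finite_subcover
        (fun q : T => (QuotientGroup.mk : G → G ⧸ K) ⁻¹' {(q : G ⧸ K)})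
        (fun q => fibopen _)
        (fun x hx => Set.mem_iUnion.2 ⟨⟨QuotientGroup.mk x, ⟨x, hx, rfl⟩⟩, rfl⟩)
      apply Set.Finite.subset (S.finite_toSet.image (fun q : T => (q : G ⧸ K)))
      rintro q ⟨x, hx, rfl⟩
      have := hS hx
      rw [Set.mem_iUnion₂] at this
      obtain ⟨i, hi, hxi⟩ := this
      rw [Set.mem_preimage, Set.mem_singleton_iff] at hxi
      exact ⟨i, by simpa using hi, hxi.symm⟩
    set F : Finset (G ⧸ K) := hTfin.toFinset with hFdef
    have hDF : D = ⋃ q ∈ F, (QuotientGroup.mk : G → G ⧸ K) ⁻¹' {q} := by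
      conv_lhs => rw [← hDsat]
      have : T = ⋃ q ∈ F, ({q} : Set (G ⧸ K)) := by
        simp [hFdef, Set.biUnion_of_singleton]
      rw [this]
      simp [Set.preimage_iUnion]
    have hdisj : (F : Set (G ⧸ K)).PairwiseDisjoint
        (fun q => (QuotientGroup.mk : G → G ⧸ K) ⁻¹' {q}) := by
      intro a _ b _ hab
      exact (Set.disjoint_singleton.2 hab).preimage _
    -- measure of D
    have hmeasD : μ D = F.card * μ (K : Set G) := by
      rw [hDF, measure_biUnion_finset hdisj (fun q _ => (fibopen q).measurableSet)]
      have : ∀ q ∈ F, μ ((QuotientGroup.mk : G → G ⧸ K) ⁻¹' {q}) = μ (K : Set G) := by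
        intro q _
        rw [fib]
        exact measure_smul μ _ _
      rw [Finset.sum_congr rfl this, Finset.sum_const, nsmul_eq_mul]
    -- inverse fibers
    have fibinv : ∀ q : G ⧸ K, ((QuotientGroup.mk : G → G ⧸ K) ⁻¹' {q})⁻¹ =
        (K : Set G) * {(q.out)⁻¹} := by
      intro q
      rw [fib]
      ext y
      simp only [Set.mem_inv, mem_leftCoset_iff, SetLike.mem_coe, Set.mul_singleton,
        Set.mem_image, SetLike.mem_coe]
      constructor
      · intro hy
        refine ⟨y * q.out, ?_, by simp⟩
        have : (q.out⁻¹ * y⁻¹)⁻¹ ∈ K := K.inv_mem hy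
        simpa using this
      · rintro ⟨z, hz, rfl⟩
        simpa using K.inv_mem hz
    have houtD : ∀ q ∈ F, (q : G ⧸ K).out ∈ D := by
      intro q hq
      rw [← hDsat]
      have : q ∈ T := by simpa [hFdef] using hq
      exact Set.mem_preimage.2 (by rw [QuotientGroup.out_eq']; exact this)
    -- measure of D⁻¹
    have hDinv : D⁻¹ = ⋃ q ∈ F, ((QuotientGroup.mk : G → G ⧸ K) ⁻¹' {q})⁻¹ := by
      rw [hDF]
      ext x
      simp [Set.mem_inv]
    have hdisjinv : (F : Set (G ⧸ K)).PairwiseDisjoint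
        (fun q => ((QuotientGroup.mk : G → G ⧸ K) ⁻¹' {q})⁻¹) := by
      intro a ha b hb hab
      have hd := hdisj ha hb hab
      simp only [Function.onFun] at hd ⊢
      rw [Set.disjoint_left] at hd ⊢
      intro x hx hx'
      exact hd (Set.mem_inv.mp hx) (Set.mem_inv.mp hx')
    have hmeasDinv : μ D⁻¹ = F.card * ((Δ g⁻¹ : ℝ≥0∞) * μ (K : Set G)) := by
      rw [hDinv, measure_biUnion_finset hdisjinv
        (fun q _ => by rw [fibinv]; exact (hopen _).measurableSet)]
      have : ∀ q ∈ F, μ (((QuotientGroup.mk : G → G ⧸ K) ⁻¹' {q})⁻¹) =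
          (Δ g⁻¹ : ℝ≥0∞) * μ (K : Set G) := by
        intro q hq
        rw [fibinv]
        exact hright g _ (houtD q hq)
      rw [Finset.sum_congr rfl this, Finset.sum_const, nsmul_eq_mul]
    -- D⁻¹ is the double coset of g⁻¹
    have hDinv' : D⁻¹ = (K : Set G) * {g⁻¹} * (K : Set G) := by
      rw [hDdef, mul_inv_rev, mul_inv_rev, inv_coe_set, Set.inv_singleton, mul_assoc]
    have hcard : (F.card : ℝ≥0∞) ≠ 0 := by
      have : QuotientGroup.mk g ∈ T := ⟨g, hgD, rfl⟩
      have hFne : F.Nonempty := ⟨QuotientGroup.mk g, by simpa [hFdef] using this⟩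
      simpa using Finset.card_ne_zero_of_mem hFne.choose_spec
    have heq : (F.card : ℝ≥0∞) * μ (K : Set G)
        = F.card * ((Δ g⁻¹ : ℝ≥0∞) * μ (K : Set G)) := by
      rw [← hmeasD, ← hmeasDinv, hDinv']
      exact h g
    have h2 : μ (K : Set G) = (Δ g⁻¹ : ℝ≥0∞) * μ (K : Set G) :=
      (ENNReal.mul_right_inj hcard (WithTop.natCast_ne_top _)).mp heq
    have h3 : (1 : ℝ≥0∞) * μ (K : Set G) = (Δ g⁻¹ : ℝ≥0∞) * μ (K : Set G) := by
      rwa [one_mul]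
    exact ((ENNReal.mul_left_inj hK0 hKtop).mp h3).symm
  -- conclude
  constructor
  intro g
  have h1 : Measure.map (· * (g⁻¹)⁻¹) μ = Δ g⁻¹ • μ :=
    Measure.isMulLeftInvariant_eq_smul _ μ
  have h2 : (Δ g⁻¹ : ℝ≥0∞) = 1 := hΔone g
  have h3 : Δ g⁻¹ = 1 := by exact_mod_cast h2
  rw [inv_inv] at h1
  rw [h1, h3, one_smul]
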